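/- arXiv:2202.01621 — 4 statements merged into one kernel-verified Lean document; each statement's English description precedes it below -/
import Mathlib

section
/- The function f(x) = (1/(2√π)) x^{-3/2} e^{-1/(4x)} on (0,∞) is a probability density: its integral over (0,∞) equals 1. -/
open Real MeasureTheory Set

theorem stable_half_density_integral :
    ∫ x in Ioi (0:ℝ), (1 / (2 * Real.sqrt π)) * x ^ ((-3:ℝ)/2) * Real.exp (-1 / (4 * x)) = 1 := by
  have key : ∫ x in Ioi (0:ℝ), x ^ ((-3:ℝ)/2) * Real.exp (-1 / (4 * x)) = 2 * Real.sqrt π := by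
    have h := integral_comp_rpow_Ioi
      (fun y : ℝ => y ^ ((-3:ℝ)/2) * Real.exp (-1 / (4 * y))) (p := -2) (by norm_num)
    rw [← h]
    have hcongr : ∀ x ∈ Ioi (0:ℝ),
        (|(-2:ℝ)| * x ^ ((-2:ℝ) - 1)) •
          ((x ^ (-2:ℝ)) ^ ((-3:ℝ)/2) * Real.exp (-1 / (4 * x ^ (-2:ℝ))))
        = 2 * Real.exp (-(1/4) * x ^ 2) := by
      intro x hx
      have hx0 : (0:ℝ) < x := hx
      have h1 : (x ^ (-2:ℝ)) ^ ((-3:ℝ)/2) = x ^ (3:ℝ) := by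
        rw [← Real.rpow_mul hx0.le]; norm_num
      have h2 : x ^ (-2:ℝ) = (x ^ 2)⁻¹ := by
        rw [Real.rpow_neg hx0.le, Real.rpow_two]
      have h3 : x ^ ((-2:ℝ) - 1) * x ^ (3:ℝ) = 1 := by
        rw [← Real.rpow_add hx0]; norm_num
      have hx2 : (x:ℝ) ^ 2 ≠ 0 := pow_ne_zero _ hx0.ne'
      rw [smul_eq_mul, h1, h2]
      have h4 : -1 / (4 * (x ^ 2)⁻¹) = -(1/4) * x ^ 2 := by
        field_simp
      rw [h4]
      rw [abs_of_nonpos (by norm_num : (-2:ℝ) ≤ 0)]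
      calc (-(-2:ℝ)) * x ^ ((-2:ℝ)-1) * (x ^ (3:ℝ) * Real.exp (-(1/4) * x^2))
            = (x ^ ((-2:ℝ)-1) * x ^ (3:ℝ)) * (2 * Real.exp (-(1/4) * x^2)) := by ring
        _ = 2 * Real.exp (-(1/4) * x^2) := by rw [h3, one_mul]
    rw [setIntegral_congr_fun measurableSet_Ioi hcongr, integral_const_mul,
      integral_gaussian_Ioi]
    rw [show π / (1/4) = 4 * π by ring, show (4:ℝ) = 2^2 by norm_num,
      Real.sqrt_mul (by positivity), Real.sqrt_sq (by norm_num)]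
    ring
  have hrw : ∀ x ∈ Ioi (0:ℝ),
      (1 / (2 * Real.sqrt π)) * x ^ ((-3:ℝ)/2) * Real.exp (-1 / (4 * x))
      = (1 / (2 * Real.sqrt π)) * (x ^ ((-3:ℝ)/2) * Real.exp (-1 / (4 * x))) := by
    intro x _; ring
  rw [setIntegral_congr_fun measurableSet_Ioi hrw, integral_const_mul, key]
  have hπ : Real.sqrt π ≠ 0 := (Real.sqrt_pos.mpr Real.pi_pos).ne'
  field_simp
end

section
/- The Laplace transform of f(x) = (1/(2√π)) x^{-3/2} e^{-1/(4x)} equals exp(-√s) for all s ≥ 0, i.e., ∫₀^∞ e^{-sx} (1/(2√π)) x^{-3/2} e^{-1/(4x)} dx = exp(-√s). -/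
open Real MeasureTheory Set

lemma mul_exp_neg_le_one (u : ℝ) (hu : 0 ≤ u) : u * Real.exp (-u) ≤ 1 := by
  have h1 : u ≤ Real.exp u := by linarith [Real.add_one_le_exp u]
  calc u * Real.exp (-u) ≤ Real.exp u * Real.exp (-u) :=
        mul_le_mul_of_nonneg_right h1 (Real.exp_pos _).le
    _ = 1 := by rw [← Real.exp_add]; simp

lemma exp_sq_split (b t : ℝ) (ht : t ≠ 0) :
    Real.exp (-(t - b/t)^2) = Real.exp (2*b) * Real.exp (-t^2) * Real.exp (-(b^2/t^2)) := by
  rw [← Real.exp_add, ← Real.exp_add]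
  congr 1
  field_simp
  ring

lemma glasser (b : ℝ) (hb : 0 < b) :
    ∫ t in Ioi (0:ℝ), Real.exp (-(t - b/t)^2) = Real.sqrt π / 2 := by
  set E : ℝ → ℝ := fun t => Real.exp (-(t - b/t)^2) with hE
  have hcont : ContinuousOn E (Ioi (0:ℝ)) := by
    apply Real.continuous_exp.comp_continuousOn
    apply ContinuousOn.neg
    apply ContinuousOn.pow
    exact continuousOn_id.sub (continuousOn_const.div continuousOn_id
      (fun t ht => ne_of_gt ht))
  have hmeas : AEStronglyMeasurable E (volume.restrict (Ioi (0:ℝ))) :=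
    hcont.aestronglyMeasurable measurableSet_Ioi
  have hg : Integrable (fun t : ℝ => Real.exp (2*b) * Real.exp (-1 * t^2))
      (volume.restrict (Ioi (0:ℝ))) :=
    ((integrable_exp_neg_mul_sq one_pos).const_mul (Real.exp (2*b))).restrict
  have hJ : IntegrableOn E (Ioi (0:ℝ)) := by
    apply Integrable.mono' hg hmeas
    filter_upwards [ae_restrict_mem measurableSet_Ioi] with t ht
    have ht' : (0:ℝ) < t := ht
    rw [Real.norm_eq_abs, abs_of_pos (Real.exp_pos _)]
    show Real.exp (-(t - b/t)^2) ≤ _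
    rw [exp_sq_split b t ht'.ne', neg_one_mul]
    have h1 : Real.exp (-(b^2/t^2)) ≤ 1 := Real.exp_le_one_iff.mpr (neg_nonpos.mpr (by positivity))
    nlinarith [Real.exp_pos (2*b), Real.exp_pos (-t^2), mul_pos (Real.exp_pos (2*b)) (Real.exp_pos (-t^2))]
  have hK : IntegrableOn (fun t => b/t^2 * E t) (Ioi (0:ℝ)) := by
    have hg2 : Integrable (fun t : ℝ => (Real.exp (2*b) / b) * Real.exp (-1 * t^2))
        (volume.restrict (Ioi (0:ℝ))) :=
      ((integrable_exp_neg_mul_sq one_pos).const_mul _).restrict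
    apply Integrable.mono' hg2
    · apply AEStronglyMeasurable.mul _ hmeas
      apply ContinuousOn.aestronglyMeasurable _ measurableSet_Ioi
      exact continuousOn_const.div (continuousOn_id.pow 2)
        (fun t ht => pow_ne_zero 2 (ne_of_gt ht))
    · filter_upwards [ae_restrict_mem measurableSet_Ioi] with t ht
      have ht' : (0:ℝ) < t := ht
      have hEt : E t = Real.exp (2*b) * Real.exp (-t^2) * Real.exp (-(b^2/t^2)) := by
        rw [hE]; exact exp_sq_split b t ht'.ne'
      rw [Real.norm_eq_abs, abs_of_pos (by positivity : (0:ℝ) < b/t^2 * E t), hEt, neg_one_mul]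
      have hu : (b^2/t^2) * Real.exp (-(b^2/t^2)) ≤ 1 :=
        mul_exp_neg_le_one _ (by positivity)
      have key : b/t^2 * Real.exp (-(b^2/t^2)) ≤ 1/b := by
        have h2 : b/t^2 * Real.exp (-(b^2/t^2)) = (b^2/t^2 * Real.exp (-(b^2/t^2))) / b := by
          field_simp
        rw [h2]
        gcongr
      calc b/t^2 * (Real.exp (2*b) * Real.exp (-t^2) * Real.exp (-(b^2/t^2)))
          = (b/t^2 * Real.exp (-(b^2/t^2))) * (Real.exp (2*b) * Real.exp (-t^2)) := by ring
        _ ≤ (1/b) * (Real.exp (2*b) * Real.exp (-t^2)) := by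
            apply mul_le_mul_of_nonneg_right key (by positivity)
        _ = Real.exp (2*b) / b * Real.exp (-t^2) := by ring
  -- Substitution u = t - b/t : (0,∞) → ℝ
  have hφderiv : ∀ t ∈ Ioi (0:ℝ), HasDerivWithinAt (fun t => t - b/t) (1 + b/t^2) (Ioi 0) t := by
    intro t ht
    have ht' : (0:ℝ) < t := ht
    have h1 : HasDerivAt (fun t : ℝ => t - b/t) (1 - (0 * t - b * 1)/t^2) t :=
      (hasDerivAt_id t).sub ((hasDerivAt_const t b).div (hasDerivAt_id t) ht'.ne')
    have : (1 : ℝ) - (0 * t - b * 1)/t^2 = 1 + b/t^2 := by field_simp; ring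
    rw [this] at h1
    exact h1.hasDerivWithinAt
  have hφmono : StrictMonoOn (fun t => t - b/t) (Ioi (0:ℝ)) := by
    intro x hx y hy hxy
    have hx' : (0:ℝ) < x := hx
    have hy' : (0:ℝ) < y := hy
    have h2 : b/y ≤ b/x := by gcongr
    simp only
    linarith
  have hφinj : InjOn (fun t => t - b/t) (Ioi (0:ℝ)) := hφmono.injOn
  have himage : (fun t : ℝ => t - b/t) '' Ioi 0 = univ := by
    apply eq_univ_of_forall
    intro u
    have hr2 : Real.sqrt (u^2 + 4*b) ^ 2 = u^2 + 4*b := Real.sq_sqrt (by positivity)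
    have hru : |u| < Real.sqrt (u^2 + 4*b) := by
      rw [← Real.sqrt_sq_eq_abs]
      exact Real.sqrt_lt_sqrt (sq_nonneg u) (by linarith)
    set r := Real.sqrt (u^2 + 4*b) with hrdef
    have ht0 : (0:ℝ) < (u + r)/2 := by
      have := neg_abs_le u
      linarith
    refine ⟨(u + r)/2, ht0, ?_⟩
    have key : ((u+r)/2)^2 - u * ((u+r)/2) = b := by nlinarith [hr2]
    show (u+r)/2 - b/((u+r)/2) = u
    have hb2 : b/((u+r)/2) = (r - u)/2 := by
      rw [div_eq_iff ht0.ne']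
      nlinarith [hr2]
    rw [hb2]
    ring
  have step1 := integral_image_eq_integral_abs_deriv_smul measurableSet_Ioi hφderiv hφinj
    (fun u => Real.exp (-u^2))
  rw [himage, Measure.restrict_univ] at step1
  have gauss : ∫ u : ℝ, Real.exp (-u^2) = Real.sqrt π := by
    have := integral_gaussian (1:ℝ)
    simp only [neg_one_mul, one_mul] at this
    rw [this]
    norm_num
  rw [gauss] at step1
  have step1' : ∫ t in Ioi (0:ℝ), |1 + b/t^2| • Real.exp (-(t - b/t)^2)
      = ∫ t in Ioi (0:ℝ), (E t + b/t^2 * E t) := by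
    apply setIntegral_congr_fun measurableSet_Ioi
    intro t ht
    have ht' : (0:ℝ) < t := ht
    simp only [smul_eq_mul, hE]
    rw [abs_of_pos (by positivity)]
    ring
  -- Substitution t ↦ b/t shows the two pieces are equal
  have hψderiv : ∀ t ∈ Ioi (0:ℝ), HasDerivWithinAt (fun t => b/t) (-(b/t^2)) (Ioi 0) t := by
    intro t ht
    have ht' : (0:ℝ) < t := ht
    have h1 : HasDerivAt (fun t : ℝ => b/t) ((0 * t - b * 1)/t^2) t :=
      (hasDerivAt_const t b).div (hasDerivAt_id t) ht'.ne'
    have : (0 * t - b * 1)/t^2 = -(b/t^2) := by field_simp; ring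
    rw [this] at h1
    exact h1.hasDerivWithinAt
  have hψinj : InjOn (fun t : ℝ => b/t) (Ioi (0:ℝ)) := by
    intro x hx y hy h
    have hx' : (0:ℝ) < x := hx
    have hy' : (0:ℝ) < y := hy
    simp only at h
    field_simp [hb.ne'] at h
    linarith
  have hψim : (fun t : ℝ => b/t) '' Ioi 0 = Ioi 0 := by
    ext x
    simp only [mem_image, mem_Ioi]
    constructor
    · rintro ⟨t, ht, rfl⟩; positivity
    · intro hx
      exact ⟨b/x, by positivity, by field_simp⟩
  have step2 := integral_image_eq_integral_abs_deriv_smul measurableSet_Ioi hψderiv hψinj E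
  rw [hψim] at step2
  have step2' : ∫ t in Ioi (0:ℝ), |(-(b/t^2))| • E (b/t)
      = ∫ t in Ioi (0:ℝ), b/t^2 * E t := by
    apply setIntegral_congr_fun measurableSet_Ioi
    intro t ht
    have ht' : (0:ℝ) < t := ht
    simp only [smul_eq_mul, abs_neg, hE]
    rw [abs_of_pos (by positivity)]
    congr 2
    field_simp
    ring
  rw [step2'] at step2
  have hsum : Real.sqrt π = (∫ t in Ioi (0:ℝ), E t) + ∫ t in Ioi (0:ℝ), b/t^2 * E t := by
    rw [step1, step1']
    exact integral_add hJ hK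
  rw [← step2] at hsum
  have : Real.sqrt π = 2 * ∫ t in Ioi (0:ℝ), E t := by linarith
  linarith

lemma glasser' (b : ℝ) (hb : 0 ≤ b) :
    ∫ t in Ioi (0:ℝ), Real.exp (-(t^2 + b^2/t^2))
      = Real.sqrt π / 2 * Real.exp (-(2*b)) := by
  rcases hb.eq_or_lt with h | h
  · subst h
    simp only [ne_eq, OfNat.ofNat_ne_zero, not_false_eq_true, zero_pow, zero_div, add_zero,
      mul_zero, neg_zero, Real.exp_zero, mul_one]
    have := integral_gaussian_Ioi 1
    simp only [neg_one_mul, div_one] at this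
    simpa using this
  · have heq : EqOn (fun t : ℝ => Real.exp (-(t^2 + b^2/t^2)))
        (fun t => Real.exp (-(2*b)) * Real.exp (-(t - b/t)^2)) (Ioi 0) := by
      intro t ht
      have ht' : (0:ℝ) < t := ht
      simp only
      rw [← Real.exp_add]
      congr 1
      field_simp
      ring
    rw [setIntegral_congr_fun measurableSet_Ioi heq, integral_const_mul, glasser b h]
    ring

theorem stable_half_laplace_transform (s : ℝ) (hs : 0 ≤ s) :
    ∫ x in Ioi (0:ℝ),
      Real.exp (-s * x) * ((1 / (2 * Real.sqrt π)) * x ^ ((-3:ℝ)/2) * Real.exp (-1 / (4 * x)))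
      = Real.exp (-Real.sqrt s) := by
  set g : ℝ → ℝ := fun x =>
    Real.exp (-s * x) * ((1 / (2 * Real.sqrt π)) * x ^ ((-3:ℝ)/2) * Real.exp (-1 / (4 * x)))
    with hg
  -- substitution x = 1/(4 t^2)
  have hρderiv : ∀ t ∈ Ioi (0:ℝ),
      HasDerivWithinAt (fun t : ℝ => 1/(4*t^2)) (-(1/(2*t^3))) (Ioi 0) t := by
    intro t ht
    have ht' : (0:ℝ) < t := ht
    have h1 : HasDerivAt (fun t : ℝ => 1/(4*t^2))
        ((0 * (4*t^2) - 1 * (4*(2*t)))/(4*t^2)^2) t := by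
      apply (hasDerivAt_const t (1:ℝ)).div
      · exact ((hasDerivAt_pow 2 t).const_mul 4).congr_deriv (by ring)
      · positivity
    have : (0 * (4*t^2) - 1 * (4*(2*t)))/(4*t^2)^2 = -(1/(2*t^3)) := by
      field_simp; ring
    rw [this] at h1
    exact h1.hasDerivWithinAt
  have hρinj : InjOn (fun t : ℝ => 1/(4*t^2)) (Ioi (0:ℝ)) := by
    intro x hx y hy h
    have hx' : (0:ℝ) < x := hx
    have hy' : (0:ℝ) < y := hy
    simp only at h
    field_simp at h
    nlinarith
  have hρim : (fun t : ℝ => 1/(4*t^2)) '' Ioi 0 = Ioi 0 := by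
    ext x
    simp only [mem_image, mem_Ioi]
    constructor
    · rintro ⟨t, ht, rfl⟩; positivity
    · intro hx
      have hsx : (0:ℝ) < Real.sqrt x := Real.sqrt_pos.mpr hx
      refine ⟨1/(2*Real.sqrt x), by positivity, ?_⟩
      have : Real.sqrt x ^ 2 = x := Real.sq_sqrt hx.le
      field_simp
      linarith
  have step := integral_image_eq_integral_abs_deriv_smul measurableSet_Ioi hρderiv hρinj g
  rw [hρim] at step
  have step' : ∫ t in Ioi (0:ℝ), |(-(1/(2*t^3)))| • g (1/(4*t^2))
      = ∫ t in Ioi (0:ℝ), (2/Real.sqrt π) * Real.exp (-(t^2 + (Real.sqrt s/2)^2/t^2)) := by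
    apply setIntegral_congr_fun measurableSet_Ioi
    intro t ht
    have ht' : (0:ℝ) < t := ht
    have h2t : (0:ℝ) < 2*t := by linarith
    have hπ : (0:ℝ) < Real.sqrt π := Real.sqrt_pos.mpr Real.pi_pos
    have hrpow : (1/(4*t^2) : ℝ) ^ ((-3:ℝ)/2) = 8*t^3 := by
      have e1 : (1/(4*t^2):ℝ) = (2*t) ^ (-2:ℝ) := by
        rw [show ((-2:ℝ)) = -((2:ℕ):ℝ) by norm_num, Real.rpow_neg h2t.le, Real.rpow_natCast]
        rw [inv_eq_one_div]
        congr 1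
        ring
      rw [e1, ← Real.rpow_mul h2t.le]
      norm_num
      ring
    simp only [smul_eq_mul, abs_neg, hg]
    rw [abs_of_pos (by positivity : (0:ℝ) < 1/(2*t^3))]
    rw [hrpow]
    have h4 : -1/(4*(1/(4*t^2))) = -(t^2) := by
      field_simp
      try ring
    have h5 : (Real.sqrt s/2)^2 = s/4 := by rw [div_pow, Real.sq_sqrt hs]; norm_num
    rw [h4, h5]
    rw [show (-(t^2 + s/4/t^2) : ℝ) = (-s * (1/(4*t^2))) + -(t^2) by field_simp; try ring]
    rw [Real.exp_add]
    field_simp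
    ring
  rw [step, step', integral_const_mul, glasser' (Real.sqrt s / 2) (by positivity)]
  rw [show 2 * (Real.sqrt s / 2) = Real.sqrt s by ring]
  have hπ : (0:ℝ) < Real.sqrt π := Real.sqrt_pos.mpr Real.pi_pos
  field_simp
end

section
/- The convolution of the gamma densities g_{1/2,0}(x) = x^{−1/2}/Γ(1/2) and g_{1/2,1}(x) = x^{−1/2}e^{−x}/Γ(1/2) equals e^{−x/2} I₀(x/2) for all x > 0. -/
open Real MeasureTheory Set

noncomputable def besselI0 (x : ℝ) : ℝ :=
  ∑' k : ℕ, (x / 2) ^ (2 * k) / ((Nat.factorial k : ℝ)) ^ 2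

lemma wallis_prod (k : ℕ) :
    (∏ i ∈ Finset.range k, ((2*(i:ℝ)+1)/(2*(i:ℝ)+2))) =
      (Nat.factorial (2*k) : ℝ) / (4 ^ k * (Nat.factorial k : ℝ) ^ 2) := by
  induction k with
  | zero => simp
  | succ n ih =>
      rw [Finset.prod_range_succ, ih]
      have h1 : (Nat.factorial (2*(n+1)) : ℝ) = (2*n+2) * ((2*n+1) * Nat.factorial (2*n)) := by
        have : 2*(n+1) = (2*n+1) + 1 := by ring
        rw [this, Nat.factorial_succ]
        have : 2*n+1 = (2*n) + 1 := by ring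
        rw [this, Nat.factorial_succ]
        push_cast; ring
      have h2 : (Nat.factorial (n+1) : ℝ) = (n+1) * Nat.factorial n := by
        rw [Nat.factorial_succ]; push_cast; ring
      have hf : (Nat.factorial n : ℝ) ≠ 0 := Nat.cast_ne_zero.mpr (Nat.factorial_ne_zero n)
      have h4 : (4:ℝ) ^ (n+1) = 4 * 4^n := by ring
      rw [h1, h2, h4]
      field_simp
      ring

lemma cos_pow_odd_integral (k : ℕ) :
    (∫ θ in (0:ℝ)..π, Real.cos θ ^ (2*k+1)) = 0 := by
  have h : (∫ θ in (0:ℝ)..π, Real.cos θ ^ (2*k+1))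
      = ∫ θ in (0:ℝ)..π, Real.cos (π - θ) ^ (2*k+1) := by
    rw [intervalIntegral.integral_comp_sub_left (fun t => Real.cos t ^ (2*k+1)) π]
    norm_num
  have h2 : ∀ θ : ℝ, Real.cos (π - θ) ^ (2*k+1) = - (Real.cos θ ^ (2*k+1)) := by
    intro θ
    rw [Real.cos_pi_sub]
    rw [Odd.neg_pow ⟨k, by ring⟩]
  simp only [h2, intervalIntegral.integral_neg] at h
  linarith

lemma cos_pow_even_integral (k : ℕ) :
    (∫ θ in (0:ℝ)..π, Real.cos θ ^ (2*k)) =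
      π * ((Nat.factorial (2*k) : ℝ) / (4 ^ k * (Nat.factorial k : ℝ) ^ 2)) := by
  rw [← wallis_prod, ← integral_sin_pow_even]
  have h1 : (∫ θ in (0:ℝ)..π, Real.cos θ ^ (2*k))
      = ∫ θ in (0:ℝ)..π, Real.sin (θ + π/2) ^ (2*k) := by
    congr 1; ext θ; rw [Real.sin_add_pi_div_two]
  rw [h1, intervalIntegral.integral_comp_add_right (fun t => Real.sin t ^ (2*k)) (π/2)]
  have hper : Function.Periodic (fun t => Real.sin t ^ (2*k)) π := by
    intro t
    simp only [Real.sin_add_pi]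
    exact Even.neg_pow ⟨k, by ring⟩ _
  have h2 := hper.intervalIntegral_add_eq (π/2) 0
  norm_num at h2 ⊢
  rw [show π + π/2 = π/2 + π by ring]
  exact h2

lemma real_exp_tsum (y : ℝ) : Real.exp y = ∑' n : ℕ, y ^ n / (Nat.factorial n : ℝ) := by
  rw [Real.exp_eq_exp_ℝ, NormedSpace.exp_eq_tsum_div]

lemma besselI0_term_eq (c : ℝ) (k : ℕ) :
    (c / 2) ^ (2 * k) / ((Nat.factorial k : ℝ)) ^ 2
      = c ^ (2*k) / (Nat.factorial (2*k) : ℝ)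
        * ((Nat.factorial (2*k) : ℝ) / (4 ^ k * (Nat.factorial k : ℝ) ^ 2)) := by
  have hf : (Nat.factorial (2*k) : ℝ) ≠ 0 := Nat.cast_ne_zero.mpr (Nat.factorial_ne_zero _)
  have hk : ((Nat.factorial k : ℝ)) ≠ 0 := Nat.cast_ne_zero.mpr (Nat.factorial_ne_zero _)
  have h2 : (2:ℝ) ^ (2*k) = 4 ^ k := by
    rw [pow_mul]; norm_num
  have h : (c/2) ^ (2*k) = c ^ (2*k) / 4 ^ k := by
    rw [div_pow, h2]
  rw [h]
  field_simp

lemma summable_bessel_terms (c : ℝ) :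
    Summable (fun k : ℕ => (c / 2) ^ (2 * k) / ((Nat.factorial k : ℝ)) ^ 2) := by
  have hone : ∀ k : ℕ, (1:ℝ) ≤ (Nat.factorial k : ℝ) := by
    intro k; exact_mod_cast Nat.one_le_iff_ne_zero.mpr (Nat.factorial_ne_zero k)
  apply Summable.of_nonneg_of_le
    (fun k => by rw [pow_mul]; positivity)
    _ (Real.summable_pow_div_factorial ((c/2)^2))
  intro k
  rw [pow_mul]
  apply div_le_div_of_nonneg_left ?_ ?_ ?_
  · positivity
  · have := hone k; positivity
  · calc ((Nat.factorial k : ℝ)) = 1 * (Nat.factorial k : ℝ) := by ring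
      _ ≤ (Nat.factorial k : ℝ) * (Nat.factorial k : ℝ) := by
          apply mul_le_mul_of_nonneg_right (hone k) (by positivity)
      _ = (Nat.factorial k : ℝ)^2 := by ring

set_option maxHeartbeats 2000000 in
lemma exp_cos_integral (c : ℝ) :
    (∫ θ in (0:ℝ)..π, Real.exp (c * Real.cos θ)) = π * besselI0 c := by
  set μ := volume.restrict (Ioc (0:ℝ) π) with hμdef
  have hμuniv : μ Set.univ = ENNReal.ofReal π := by
    rw [hμdef, Measure.restrict_apply_univ, Real.volume_Ioc, sub_zero]
  set F : ℕ → ℝ → ℝ := fun n θ => (c * Real.cos θ) ^ n / (Nat.factorial n : ℝ) with hF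
  have hFint : ∀ n : ℕ, Integrable (F n) μ := by
    intro n
    exact Continuous.integrableOn_Ioc
      (((continuous_const.mul Real.continuous_cos).pow n).div_const _)
  have hbound : ∀ n : ℕ, ∀ θ : ℝ, ‖F n θ‖ ≤ |c| ^ n / (Nat.factorial n : ℝ) := by
    intro n θ
    rw [hF]
    have h1 : ‖(c * Real.cos θ) ^ n / (Nat.factorial n : ℝ)‖
        = |c * Real.cos θ| ^ n / (Nat.factorial n : ℝ) := by
      rw [norm_div, norm_pow, Real.norm_eq_abs, Real.norm_eq_abs, Nat.abs_cast]
    rw [h1]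
    have h2 : |c * Real.cos θ| ≤ |c| := by
      calc |c * Real.cos θ| = |c| * |Real.cos θ| := abs_mul _ _
        _ ≤ |c| * 1 := mul_le_mul_of_nonneg_left (Real.abs_cos_le_one θ) (abs_nonneg c)
        _ = |c| := mul_one _
    have h3 : |c * Real.cos θ| ^ n ≤ |c| ^ n := pow_le_pow_left₀ (abs_nonneg _) h2 n
    have h4 : (0:ℝ) < (Nat.factorial n : ℝ) := by
      exact_mod_cast Nat.factorial_pos n
    exact (div_le_div_iff_of_pos_right h4).mpr h3
  have hnormint : ∀ n : ℕ, (∫ θ, ‖F n θ‖ ∂μ) ≤ π * (|c| ^ n / (Nat.factorial n : ℝ)) := by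
    intro n
    calc (∫ θ, ‖F n θ‖ ∂μ) ≤ ∫ _, |c| ^ n / (Nat.factorial n : ℝ) ∂μ := by
          apply integral_mono (hFint n).norm (integrable_const _) (hbound n)
      _ = (μ Set.univ).toReal * (|c| ^ n / (Nat.factorial n : ℝ)) := by
          rw [MeasureTheory.integral_const]; simp [smul_eq_mul]; exact Or.inl rfl
      _ = π * (|c| ^ n / (Nat.factorial n : ℝ)) := by
          rw [hμuniv, ENNReal.toReal_ofReal Real.pi_pos.le]
  have hsum : Summable (fun n => ∫ θ, ‖F n θ‖ ∂μ) := by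
    apply Summable.of_nonneg_of_le
      (fun n => integral_nonneg (fun θ => norm_nonneg _)) hnormint
    exact (Real.summable_pow_div_factorial |c|).mul_left π
  have key : (∫ θ, Real.exp (c * Real.cos θ) ∂μ) = ∑' n, ∫ θ, F n θ ∂μ := by
    rw [MeasureTheory.integral_tsum_of_summable_integral_norm hFint hsum]
    congr 1
    ext θ
    exact real_exp_tsum (c * Real.cos θ)
  have hFval : ∀ n : ℕ, (∫ θ, F n θ ∂μ)
      = c ^ n / (Nat.factorial n : ℝ) * ∫ θ in (0:ℝ)..π, Real.cos θ ^ n := by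
    intro n
    rw [← intervalIntegral.integral_const_mul,
        intervalIntegral.integral_of_le Real.pi_pos.le]
    congr 1
    ext θ
    rw [hF]
    simp only [mul_pow]
    ring
  rw [intervalIntegral.integral_of_le Real.pi_pos.le, key]
  have heven : ∀ k : ℕ, (∫ θ, F (2*k) θ ∂μ)
      = π * ((c / 2) ^ (2 * k) / ((Nat.factorial k : ℝ)) ^ 2) := by
    intro k
    rw [hFval, cos_pow_even_integral, besselI0_term_eq]
    ring
  have hodd : ∀ k : ℕ, (∫ θ, F (2*k+1) θ ∂μ) = 0 := by
    intro k
    rw [hFval, cos_pow_odd_integral, mul_zero]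
  have hse : Summable (fun k : ℕ => ∫ θ, F (2*k) θ ∂μ) := by
    apply Summable.congr ((summable_bessel_terms c).mul_left π)
    intro k; exact (heven k).symm
  have hso : Summable (fun k : ℕ => ∫ θ, F (2*k+1) θ ∂μ) := by
    apply Summable.congr summable_zero
    intro k; exact (hodd k).symm
  rw [← tsum_even_add_odd hse hso]
  rw [tsum_congr heven, tsum_congr hodd, tsum_zero, add_zero, tsum_mul_left]
  rfl

lemma g_contOn (x : ℝ) :
    ContinuousOn
      (fun y => (x - y) ^ ((-1:ℝ)/2) * (y ^ ((-1:ℝ)/2) * Real.exp (-y))) (Ioo 0 x) := by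
  apply ContinuousOn.mul
  · apply ContinuousOn.rpow_const (continuous_const.sub continuous_id).continuousOn
    intro y hy
    left
    simp only [Pi.sub_apply, id_eq]
    intro h
    nlinarith [hy.2]
  · apply ContinuousOn.mul
    · apply ContinuousOn.rpow_const continuous_id.continuousOn
      intro y hy
      left
      simp only [id_eq]
      exact ne_of_gt hy.1
    · exact (Real.continuous_exp.comp continuous_neg).continuousOn

lemma g_integrable (x : ℝ) (hx : 0 < x) :
    IntervalIntegrable
      (fun y => (x - y) ^ ((-1:ℝ)/2) * (y ^ ((-1:ℝ)/2) * Real.exp (-y))) volume 0 x := by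
  set g : ℝ → ℝ := fun y => (x - y) ^ ((-1:ℝ)/2) * (y ^ ((-1:ℝ)/2) * Real.exp (-y)) with hg
  have hx2 : (0:ℝ) < x/2 := by linarith
  have part1 : IntervalIntegrable g volume 0 (x/2) := by
    have hφ : IntervalIntegrable (fun y : ℝ => (x/2) ^ ((-1:ℝ)/2) * y ^ ((-1:ℝ)/2))
        volume 0 (x/2) :=
      (intervalIntegral.intervalIntegrable_rpow' (by norm_num)).const_mul _
    have hms : AEStronglyMeasurable g (volume.restrict (Set.uIoc (0:ℝ) (x/2))) := by
      rw [uIoc_of_le (by linarith : (0:ℝ) ≤ x/2),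
          ← Measure.restrict_congr_set Ioo_ae_eq_Ioc]
      apply ContinuousOn.aestronglyMeasurable _ measurableSet_Ioo
      apply (g_contOn x).mono
      intro y hy
      exact ⟨hy.1, by linarith [hy.2]⟩
    apply hφ.mono_fun hms
    rw [uIoc_of_le (by linarith : (0:ℝ) ≤ x/2)]
    filter_upwards [ae_restrict_mem measurableSet_Ioc] with y hy
    obtain ⟨hy0, hy1⟩ := hy
    have hxy : (0:ℝ) < x - y := by linarith
    have hg0 : 0 ≤ g y := by
      rw [hg]
      positivity
    have hφ0 : (0:ℝ) ≤ (x/2) ^ ((-1:ℝ)/2) * y ^ ((-1:ℝ)/2) := by positivity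
    rw [Real.norm_eq_abs, Real.norm_eq_abs, abs_of_nonneg hg0, abs_of_nonneg hφ0, hg]
    have h1 : (x - y) ^ ((-1:ℝ)/2) ≤ (x/2) ^ ((-1:ℝ)/2) :=
      Real.rpow_le_rpow_of_nonpos hx2 (by linarith) (by norm_num)
    have h2 : y ^ ((-1:ℝ)/2) * Real.exp (-y) ≤ y ^ ((-1:ℝ)/2) := by
      apply mul_le_of_le_one_right (Real.rpow_nonneg hy0.le _)
      exact Real.exp_le_one_iff.mpr (by linarith)
    apply mul_le_mul h1 h2 (by positivity) (by positivity)
  have part2 : IntervalIntegrable g volume (x/2) x := by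
    have hbase : IntervalIntegrable (fun t : ℝ => t ^ ((-1:ℝ)/2)) volume (x/2) 0 :=
      intervalIntegral.intervalIntegrable_rpow' (by norm_num)
    have hcomp := hbase.comp_sub_left x
    have hxx : x - x/2 = x/2 := by ring
    rw [hxx, sub_zero] at hcomp
    have hφ : IntervalIntegrable (fun y : ℝ => (x/2) ^ ((-1:ℝ)/2) * (x - y) ^ ((-1:ℝ)/2))
        volume (x/2) x := hcomp.const_mul _
    have hms : AEStronglyMeasurable g (volume.restrict (Set.uIoc (x/2) x)) := by
      rw [uIoc_of_le (by linarith : x/2 ≤ x),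
          ← Measure.restrict_congr_set Ioo_ae_eq_Ioc]
      apply ContinuousOn.aestronglyMeasurable _ measurableSet_Ioo
      apply (g_contOn x).mono
      intro y hy
      exact ⟨by linarith [hy.1], hy.2⟩
    apply hφ.mono_fun hms
    rw [uIoc_of_le (by linarith : x/2 ≤ x)]
    filter_upwards [ae_restrict_mem measurableSet_Ioc] with y hy
    obtain ⟨hy0, hy1⟩ := hy
    have hxy : (0:ℝ) ≤ x - y := by linarith
    have hy0' : (0:ℝ) < y := by linarith
    have hg0 : 0 ≤ g y := by
      rw [hg]
      positivity
    have hφ0 : (0:ℝ) ≤ (x/2) ^ ((-1:ℝ)/2) * (x - y) ^ ((-1:ℝ)/2) := by positivity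
    rw [Real.norm_eq_abs, Real.norm_eq_abs, abs_of_nonneg hg0, abs_of_nonneg hφ0, hg]
    have h1 : y ^ ((-1:ℝ)/2) ≤ (x/2) ^ ((-1:ℝ)/2) :=
      Real.rpow_le_rpow_of_nonpos hx2 hy0.le (by norm_num)
    have h2 : y ^ ((-1:ℝ)/2) * Real.exp (-y) ≤ (x/2) ^ ((-1:ℝ)/2) := by
      calc y ^ ((-1:ℝ)/2) * Real.exp (-y) ≤ y ^ ((-1:ℝ)/2) := by
            apply mul_le_of_le_one_right (Real.rpow_nonneg hy0'.le _)
            exact Real.exp_le_one_iff.mpr (by linarith)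
        _ ≤ (x/2) ^ ((-1:ℝ)/2) := h1
    calc (x - y) ^ ((-1:ℝ)/2) * (y ^ ((-1:ℝ)/2) * Real.exp (-y))
        ≤ (x - y) ^ ((-1:ℝ)/2) * (x/2) ^ ((-1:ℝ)/2) := by
          apply mul_le_mul_of_nonneg_left h2 (Real.rpow_nonneg hxy _)
      _ = (x/2) ^ ((-1:ℝ)/2) * (x - y) ^ ((-1:ℝ)/2) := by ring
  exact part1.trans part2

lemma rpow_sq_neg_half {c : ℝ} (hc : 0 < c) : (c^2 : ℝ) ^ ((-1:ℝ)/2) = c⁻¹ := by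
  rw [← Real.rpow_natCast c 2, ← Real.rpow_mul hc.le]
  norm_num
  exact Real.rpow_neg_one c

set_option maxHeartbeats 2000000 in
lemma subst_lemma (x : ℝ) (hx : 0 < x) :
    (∫ y in (0:ℝ)..x, (x - y) ^ ((-1:ℝ)/2) * (y ^ ((-1:ℝ)/2) * Real.exp (-y)))
      = ∫ θ in (0:ℝ)..π, Real.exp (-(x * Real.sin (θ/2) ^ 2)) := by
  set g : ℝ → ℝ := fun y => (x - y) ^ ((-1:ℝ)/2) * (y ^ ((-1:ℝ)/2) * Real.exp (-y)) with hg
  set f : ℝ → ℝ := fun θ => x * Real.sin (θ/2) ^ 2 with hf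
  set f' : ℝ → ℝ := fun θ => x * (Real.sin (θ/2) * Real.cos (θ/2)) with hf'
  have hderiv : ∀ θ : ℝ, HasDerivAt f (f' θ) θ := by
    intro θ
    have h1 : HasDerivAt (fun t : ℝ => t/2) (1/2) θ := (hasDerivAt_id θ).div_const 2
    have h2 : HasDerivAt (fun t : ℝ => Real.sin (t/2)) (Real.cos (θ/2) * (1/2)) θ :=
      by have := (Real.hasDerivAt_sin (θ/2)).comp θ h1; exact this
    have h3 : HasDerivAt f _ θ := (h2.pow 2).const_mul x
    convert h3 using 1
    simp only [hf', pow_one, Nat.cast_ofNat]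
    ring
  have hfcont : ContinuousOn f (uIcc (0:ℝ) π) :=
    (continuous_const.mul ((Real.continuous_sin.comp
      (continuous_id.div_const 2)).pow 2)).continuousOn
  have hminmax : min (0:ℝ) π = 0 ∧ max (0:ℝ) π = π :=
    ⟨min_eq_left Real.pi_pos.le, max_eq_right Real.pi_pos.le⟩
  have himg_oo : ∀ θ ∈ Ioo (0:ℝ) π, f θ ∈ Ioo 0 x := by
    intro θ hθ
    have h2 : 0 < θ/2 := by linarith [hθ.1]
    have h3 : θ/2 < π/2 := by linarith [hθ.2]
    have hs : 0 < Real.sin (θ/2) :=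
      Real.sin_pos_of_pos_of_lt_pi h2 (by linarith [Real.pi_pos])
    have hc : 0 < Real.cos (θ/2) :=
      Real.cos_pos_of_mem_Ioo ⟨by linarith, h3⟩
    have hs1 : Real.sin (θ/2) ^ 2 < 1 := by
      have := Real.sin_sq_add_cos_sq (θ/2)
      nlinarith
    constructor
    · rw [hf]; positivity
    · rw [hf]
      calc x * Real.sin (θ/2) ^ 2 < x * 1 := by
            apply mul_lt_mul_of_pos_left hs1 hx
        _ = x := mul_one x
  have himg_cc : ∀ θ : ℝ, f θ ∈ Icc 0 x := by
    intro θ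
    have h1 : Real.sin (θ/2) ^ 2 ≤ 1 := by
      have := Real.sin_sq_add_cos_sq (θ/2)
      nlinarith [sq_nonneg (Real.cos (θ/2))]
    constructor
    · rw [hf]; positivity
    · rw [hf]
      calc x * Real.sin (θ/2) ^ 2 ≤ x * 1 := by
            apply mul_le_mul_of_nonneg_left h1 hx.le
        _ = x := mul_one x
  have hgcont : ContinuousOn g (Ioo 0 x) := g_contOn x
  have hpoint : ∀ θ ∈ Ioo (0:ℝ) π, g (f θ) * f' θ = Real.exp (-(x * Real.sin (θ/2) ^ 2)) := by
    intro θ hθ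
    have h2 : 0 < θ/2 := by linarith [hθ.1]
    have h3 : θ/2 < π/2 := by linarith [hθ.2]
    have hs : 0 < Real.sin (θ/2) :=
      Real.sin_pos_of_pos_of_lt_pi h2 (by linarith [Real.pi_pos])
    have hc : 0 < Real.cos (θ/2) :=
      Real.cos_pos_of_mem_Ioo ⟨by linarith, h3⟩
    have hsub : x - f θ = x * Real.cos (θ/2) ^ 2 := by
      rw [hf]
      have := Real.sin_sq_add_cos_sq (θ/2)
      nlinarith
    have e1 : (x - f θ) ^ ((-1:ℝ)/2) = x ^ ((-1:ℝ)/2) * (Real.cos (θ/2))⁻¹ := by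
      rw [hsub, Real.mul_rpow hx.le (sq_nonneg _), rpow_sq_neg_half hc]
    have e2 : (f θ : ℝ) ^ ((-1:ℝ)/2) = x ^ ((-1:ℝ)/2) * (Real.sin (θ/2))⁻¹ := by
      rw [hf]
      simp only []
      rw [Real.mul_rpow hx.le (sq_nonneg _), rpow_sq_neg_half hs]
    have e3 : x ^ ((-1:ℝ)/2) * x ^ ((-1:ℝ)/2) = x⁻¹ := by
      rw [← Real.rpow_add hx]
      norm_num
      exact Real.rpow_neg_one x
    rw [hg]
    simp only []
    rw [e1, e2, hf']
    have expand : x ^ ((-1:ℝ)/2) * (Real.cos (θ/2))⁻¹ *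
        (x ^ ((-1:ℝ)/2) * (Real.sin (θ/2))⁻¹ * Real.exp (-(f θ))) *
        (x * (Real.sin (θ/2) * Real.cos (θ/2)))
        = (x ^ ((-1:ℝ)/2) * x ^ ((-1:ℝ)/2) * x) * Real.exp (-(f θ)) *
          ((Real.sin (θ/2))⁻¹ * Real.sin (θ/2)) * ((Real.cos (θ/2))⁻¹ * Real.cos (θ/2)) := by
      ring
    rw [expand, e3, inv_mul_cancel₀ (ne_of_gt hs), inv_mul_cancel₀ (ne_of_gt hc),
        inv_mul_cancel₀ (ne_of_gt hx)]
    rw [hf]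
    ring
  have hsubst := intervalIntegral.integral_comp_mul_deriv''' (a := 0) (b := π)
    (f := f) (f' := f') (g := g) hfcont
    (by
      rw [hminmax.1, hminmax.2]
      intro θ hθ
      exact (hderiv θ).hasDerivWithinAt)
    (by
      rw [hminmax.1, hminmax.2]
      apply hgcont.mono
      rintro y ⟨θ, hθ, rfl⟩
      exact himg_oo θ hθ)
    (by
      have hIcc : IntegrableOn g (Icc 0 x) volume := by
        have := (intervalIntegrable_iff' (μ := volume) (a := (0:ℝ)) (b := x)).mp
          (g_integrable x hx)
        rwa [uIcc_of_le hx.le] at this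
      apply hIcc.mono_set
      rintro y ⟨θ, _, rfl⟩
      exact himg_cc θ)
    (by
      -- integrable on [[0, π]] : a.e. equal to continuous function
      have hcont : Continuous (fun θ : ℝ => Real.exp (-(x * Real.sin (θ/2) ^ 2))) := by
        apply Real.continuous_exp.comp
        apply Continuous.neg
        exact continuous_const.mul ((Real.continuous_sin.comp (continuous_id.div_const 2)).pow 2)
      have hIcc : IntegrableOn (fun θ : ℝ => Real.exp (-(x * Real.sin (θ/2) ^ 2)))
          (uIcc (0:ℝ) π) volume := hcont.integrableOn_uIcc
      apply hIcc.congr_fun_ae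
      have hnull : volume ({0, π} : Set ℝ) = 0 :=
        Set.Countable.measure_zero ((Set.countable_singleton π).insert 0) volume
      have hae : ∀ᵐ θ : ℝ ∂volume, θ ∉ ({0, π} : Set ℝ) := by
        have hset : {a : ℝ | ¬ a ∉ ({0, π} : Set ℝ)} = ({0, π} : Set ℝ) := by
          ext a; simp [not_not]; tauto
        rw [ae_iff, hset]
        exact hnull
      rw [uIcc_of_le Real.pi_pos.le]
      filter_upwards [ae_restrict_of_ae hae, ae_restrict_mem measurableSet_Icc] with θ hθn hθm
      have hθoo : θ ∈ Ioo (0:ℝ) π := by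
        rcases hθm with ⟨h1, h2⟩
        constructor
        · rcases lt_or_eq_of_le h1 with h | h
          · exact h
          · exact absurd h.symm (fun hh => hθn (by simp [hh]))
        · rcases lt_or_eq_of_le h2 with h | h
          · exact h
          · exact absurd h (fun hh => hθn (by simp [hh]))
      exact (hpoint θ hθoo).symm)
  have hf0 : f 0 = 0 := by rw [hf]; simp
  have hfπ : f π = x := by
    rw [hf]
    simp [Real.sin_pi_div_two]
  rw [hf0, hfπ] at hsubst
  rw [← hsubst]
  apply intervalIntegral.integral_congr_ae
  have hnull : volume ({π} : Set ℝ) = 0 := measure_singleton π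
  have hae : ∀ᵐ θ : ℝ ∂volume, θ ∉ ({π} : Set ℝ) := by
    rw [ae_iff]
    simpa using hnull
  filter_upwards [hae] with θ hθn hθmem
  rw [uIoc_of_le Real.pi_pos.le] at hθmem
  have hθoo : θ ∈ Ioo (0:ℝ) π := by
    rcases hθmem with ⟨h1, h2⟩
    refine ⟨h1, ?_⟩
    rcases lt_or_eq_of_le h2 with h | h
    · exact h
    · exact absurd h (fun hh => hθn (by simp [hh]))
  simpa [Function.comp] using hpoint θ hθoo

theorem gamma_half_convolution_bessel (x : ℝ) (hx : 0 < x) :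
    ∫ y in (0:ℝ)..x,
        ((x - y) ^ ((-1:ℝ)/2) / Real.Gamma (1/2)) *
        (y ^ ((-1:ℝ)/2) * Real.exp (-y) / Real.Gamma (1/2))
      = Real.exp (-x / 2) * besselI0 (x / 2) := by
  have hΓ : Real.Gamma (1/2) = Real.sqrt π := Real.Gamma_one_half_eq
  have hΓsq : Real.Gamma (1/2) * Real.Gamma (1/2) = π := by
    rw [hΓ]; exact Real.mul_self_sqrt Real.pi_pos.le
  have hrw : (fun y => ((x - y) ^ ((-1:ℝ)/2) / Real.Gamma (1/2)) *
      (y ^ ((-1:ℝ)/2) * Real.exp (-y) / Real.Gamma (1/2)))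
      = fun y => π⁻¹ * ((x - y) ^ ((-1:ℝ)/2) * (y ^ ((-1:ℝ)/2) * Real.exp (-y))) := by
    funext y
    rw [div_mul_div_comm, hΓsq]
    ring
  rw [hrw, intervalIntegral.integral_const_mul, subst_lemma x hx]
  have hexp : ∀ θ : ℝ, Real.exp (-(x * Real.sin (θ/2) ^ 2))
      = Real.exp (-x/2) * Real.exp (x/2 * Real.cos θ) := by
    intro θ
    rw [← Real.exp_add]
    congr 1
    have h : Real.sin (θ/2) ^ 2 = 1/2 - Real.cos (2 * (θ/2)) / 2 :=
      Real.sin_sq_eq_half_sub (θ/2)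
    rw [mul_div_cancel₀ θ (two_ne_zero)] at h
    rw [h]
    ring
  rw [show (fun θ => Real.exp (-(x * Real.sin (θ/2) ^ 2)))
      = fun θ => Real.exp (-x/2) * Real.exp (x/2 * Real.cos θ) from funext hexp]
  rw [intervalIntegral.integral_const_mul, exp_cos_integral (x/2)]
  rw [← mul_assoc, mul_comm π⁻¹ (Real.exp (-x/2)), mul_assoc, ← mul_assoc π⁻¹ π,
      inv_mul_cancel₀ (ne_of_gt Real.pi_pos), one_mul]
end

section
/- Mittag-Leffler series representation of the fractional gamma density: for 0 < α < 1 and λ > 0, the function m(x) = −Σ_{k=1}^∞ (−λ)^k x^{αk−1}/Γ(αk) on (0,∞) has Laplace transform ∫₀^∞ e^{−sx} m(x) dx = λ/(λ + s^α) for all s with s^α > λ. -/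
open Real MeasureTheory Set

lemma ml_integrable_aux (t s : ℝ) (ht : 0 < t) (hs : 0 < s) :
    IntegrableOn (fun x : ℝ => Real.exp (-s * x) * x ^ (t - 1)) (Ioi 0) := by
  have h := integrableOn_rpow_mul_exp_neg_mul_rpow (p := 1) (s := t - 1) (b := s)
    (by linarith) zero_lt_one hs
  refine h.congr_fun (fun x hx => ?_) measurableSet_Ioi
  dsimp only
  rw [Real.rpow_one, mul_comm, neg_mul]

lemma ml_integral_aux (t s : ℝ) (ht : 0 < t) (hs : 0 < s) :
    ∫ x in Ioi (0:ℝ), Real.exp (-s * x) * x ^ (t - 1) = (1 / s) ^ t * Real.Gamma t := by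
  rw [← Real.integral_rpow_mul_exp_neg_mul_Ioi ht hs]
  refine setIntegral_congr_fun measurableSet_Ioi (fun x hx => ?_)
  rw [mul_comm, neg_mul]

theorem mittag_leffler_fractional_gamma_laplace (α lam : ℝ)
    (hα : 0 < α) (hα1 : α < 1) (hlam : 0 < lam)
    (m : ℝ → ℝ)
    (hm : ∀ x : ℝ, m x = -∑' k : ℕ, (-lam) ^ (k + 1) * x ^ (α * (k + 1) - 1) / Real.Gamma (α * (k + 1)))
    (s : ℝ) (hs : 0 < s) (hsα : lam < s ^ α) :
    ∫ x in Ioi (0:ℝ), Real.exp (-s * x) * m x = lam / (lam + s ^ α) := by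
  have hsα0 : 0 < s ^ α := Real.rpow_pos_of_pos hs α
  set r : ℝ := lam / s ^ α with hr
  have hr0 : 0 < r := div_pos hlam hsα0
  have hr1 : r < 1 := (div_lt_one hsα0).mpr hsα
  -- the family of functions
  set F : ℕ → ℝ → ℝ := fun k x =>
    Real.exp (-s * x) * ((-lam) ^ (k + 1) * x ^ (α * (k + 1) - 1) / Real.Gamma (α * (k + 1)))
    with hF
  have htk : ∀ k : ℕ, (0:ℝ) < α * (k + 1) := by
    intro k
    have : (0:ℝ) < (k:ℝ) + 1 := by positivity
    calc (0:ℝ) < α * ((k:ℝ) + 1) := by positivity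
    _ = α * (k + 1) := by push_cast; ring
  have hGpos : ∀ k : ℕ, 0 < Real.Gamma (α * (k + 1)) := fun k =>
    Real.Gamma_pos_of_pos (htk k)
  -- each F k is integrable on Ioi 0
  have hFint : ∀ k : ℕ, IntegrableOn (F k) (Ioi 0) := by
    intro k
    have h : IntegrableOn (fun x : ℝ => ((-lam) ^ (k + 1) / Real.Gamma (α * (k + 1))) *
        (Real.exp (-s * x) * x ^ (α * (k + 1) - 1))) (Ioi 0) :=
      (ml_integrable_aux (α * (k + 1)) s (htk k) hs).const_mul _
    refine h.congr_fun (fun x hx => ?_) measurableSet_Ioi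
    simp only [hF]
    ring
  -- the value of each integral
  have hpow : ∀ k : ℕ, (1 / s) ^ (α * ((k:ℝ) + 1)) = ((s ^ α)⁻¹) ^ (k + 1) := by
    intro k
    rw [Real.rpow_mul (by positivity), one_div, Real.inv_rpow hs.le,
      show ((k:ℝ) + 1) = ((k + 1 : ℕ) : ℝ) by push_cast; ring, Real.rpow_natCast]
  have hFval : ∀ k : ℕ, ∫ x in Ioi (0:ℝ), F k x = (-r) ^ (k + 1) := by
    intro k
    have : ∫ x in Ioi (0:ℝ), F k x =
        ((-lam) ^ (k + 1) / Real.Gamma (α * (k + 1))) *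
          ∫ x in Ioi (0:ℝ), Real.exp (-s * x) * x ^ (α * (k + 1) - 1) := by
      rw [← integral_const_mul]
      refine setIntegral_congr_fun measurableSet_Ioi (fun x hx => ?_)
      simp only [hF]; ring
    rw [this, ml_integral_aux _ s (htk k) hs, hpow k,
      show (-r : ℝ) = (-lam) * (s ^ α)⁻¹ by rw [hr]; field_simp, mul_pow]
    have hG := (hGpos k).ne'
    field_simp
  -- the norm integrals
  have hFnorm : ∀ k : ℕ, ∫ x in Ioi (0:ℝ), ‖F k x‖ = r ^ (k + 1) := by
    intro k
    have : ∫ x in Ioi (0:ℝ), ‖F k x‖ =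
        (lam ^ (k + 1) / Real.Gamma (α * (k + 1))) *
          ∫ x in Ioi (0:ℝ), Real.exp (-s * x) * x ^ (α * (k + 1) - 1) := by
      rw [← integral_const_mul]
      refine setIntegral_congr_fun measurableSet_Ioi (fun x hx => ?_)
      have hx0 : (0:ℝ) < x := hx
      simp only [hF]
      rw [Real.norm_eq_abs, abs_mul, abs_of_pos (Real.exp_pos _), abs_div,
        abs_of_pos (hGpos k), abs_mul, abs_pow, abs_neg, abs_of_pos hlam,
        abs_of_pos (Real.rpow_pos_of_pos hx0 _)]
      ring
    rw [this, ml_integral_aux _ s (htk k) hs, hpow k,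
      show (r : ℝ) = lam * (s ^ α)⁻¹ by rw [hr]; field_simp, mul_pow]
    have hG := (hGpos k).ne'
    field_simp
  have hFsum : Summable fun k : ℕ => ∫ x in Ioi (0:ℝ), ‖F k x‖ := by
    have : Summable fun k : ℕ => r ^ (k + 1) := by
      simpa [pow_succ] using (summable_geometric_of_lt_one hr0.le hr1).mul_right r
    exact this.congr fun k => (hFnorm k).symm
  -- swap sum and integral
  have hswap := MeasureTheory.integral_tsum_of_summable_integral_norm hFint hFsum
  have habs : |(-r)| < 1 := by rw [abs_neg, abs_of_pos hr0]; exact hr1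
  have hsum : ∑' k : ℕ, (-r) ^ (k + 1) = -(lam / (lam + s ^ α)) := by
    have : ∑' k : ℕ, (-r) ^ (k + 1) = (∑' k : ℕ, (-r) ^ k) * (-r) := by
      rw [← tsum_mul_right]
      exact tsum_congr fun k => (pow_succ _ _)
    rw [this, tsum_geometric_of_abs_lt_one habs]
    have h1 : lam + s ^ α ≠ 0 := by positivity
    rw [hr]
    field_simp
    ring_nf
    linear_combination (-1 : ℝ) * mul_inv_cancel₀ h1
  -- now compute
  have hmain : ∀ x ∈ Ioi (0:ℝ), Real.exp (-s * x) * m x = -∑' k : ℕ, F k x := by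
    intro x _
    rw [hm x, mul_neg, ← tsum_mul_left]
  calc ∫ x in Ioi (0:ℝ), Real.exp (-s * x) * m x
      = ∫ x in Ioi (0:ℝ), -∑' k : ℕ, F k x :=
        setIntegral_congr_fun measurableSet_Ioi hmain
    _ = -∫ x in Ioi (0:ℝ), ∑' k : ℕ, F k x := by rw [integral_neg]
    _ = -∑' k : ℕ, ∫ x in Ioi (0:ℝ), F k x := by rw [← hswap]
    _ = -∑' k : ℕ, (-r) ^ (k + 1) := by
        congr 1; exact tsum_congr fun k => hFval k
    _ = lam / (lam + s ^ α) := by rw [hsum, neg_neg]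
end
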